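/- Let m ≥ 2 be an integer, h > 0, and let λ be a real number with |λ| < e^{−h}. Then the series Σ_{γ=1}^{∞} λ^γ ψ_m(hγ) converges absolutely and Σ_{γ=1}^{∞} λ^γ ψ_m(hγ) = λ · P_{2m−2}(λ) / (4(λe^{h}−1)(e^{h}−λ)(1−λ)^{2m−2}), where P_{2m−2}(λ) = (1−e^{2h})(1−λ)^{2m−2} − 2(λ(e^{2h}+1) − e^{h}(λ²+1)) · Σ_{j=1}^{m−1} (h^{2j−1}/(2j−1)!) · (1−λ)^{2m−2−2j} · E_{2j−2}(λ). -/

import Mathlib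

/-- The `i`-th forward finite difference of the function `γ ↦ γ^k` evaluated at `0`,
i.e. `Δ^i 0^k = ∑_{j=0}^{i} (-1)^(i-j) C(i,j) j^k` (with `0^0 = 1`). -/
noncomputable def finDiff0 (i k : ℕ) : ℝ :=
  ∑ j ∈ Finset.range (i + 1), (-1 : ℝ) ^ (i - j) * (i.choose j : ℝ) * (j : ℝ) ^ k

/-- The Euler polynomial of degree `k`:
`E_k(λ) = ∑_{i=1}^{k+1} Δ^i 0^{k+1} (λ-1)^{k+1-i}`. -/
noncomputable def eulerE (k : ℕ) (x : ℝ) : ℝ :=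
  ∑ i ∈ Finset.Icc 1 (k + 1), finDiff0 i (k + 1) * (x - 1) ^ (k + 1 - i)

/-- `ψ_m(x) = (sign x)/2 · ((e^x - e^{-x})/2 - ∑_{k=1}^{m-1} x^{2k-1}/(2k-1)!)`, the
fundamental solution of `d^{2m}/dx^{2m} - d^{2m-2}/dx^{2m-2}`. -/
noncomputable def psiM (m : ℕ) (x : ℝ) : ℝ :=
  Real.sign x / 2 *
    ((Real.exp x - Real.exp (-x)) / 2 -
      ∑ k ∈ Finset.Icc 1 (m - 1), x ^ (2 * k - 1) / (Nat.factorial (2 * k - 1) : ℝ))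

/-- The polynomial `P_{2m-2}(λ) = (1-e^{2h})(1-λ)^{2m-2}
  - 2(λ(e^{2h}+1) - e^h(λ²+1)) ∑_{j=1}^{m-1} (h^{2j-1}/(2j-1)!) (1-λ)^{2m-2-2j} E_{2j-2}(λ)`. -/
noncomputable def Ppoly (m : ℕ) (h x : ℝ) : ℝ :=
  (1 - Real.exp (2 * h)) * (1 - x) ^ (2 * m - 2) -
    2 * (x * (Real.exp (2 * h) + 1) - Real.exp h * (x ^ 2 + 1)) *
      ∑ j ∈ Finset.Icc 1 (m - 1),
        h ^ (2 * j - 1) / (Nat.factorial (2 * j - 1) : ℝ) *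
          (1 - x) ^ (2 * m - 2 - 2 * j) * eulerE (2 * j - 2) x

lemma finDiff0_eq (i k : ℕ) :
    finDiff0 i k = ∑ j ∈ Finset.range (i + 1), (-1 : ℝ) ^ (i + j) * (i.choose j : ℝ) * (j : ℝ) ^ k := by
  refine Finset.sum_congr rfl fun j hj => ?_
  rw [Finset.mem_range] at hj
  have : i + j = (i - j) + 2 * j := by omega
  rw [this, pow_add, pow_mul, neg_one_sq, one_pow, mul_one]

lemma finDiff0_eq_zero : ∀ k i : ℕ, k < i → finDiff0 i k = 0 := by
  intro k
  induction k using Nat.strong_induction_on with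
  | _ k IH =>
    intro i hik
    match k with
    | 0 =>
      unfold finDiff0
      simp only [pow_zero, mul_one]
      have h0 : ((1 : ℝ) + (-1)) ^ i = ∑ j ∈ Finset.range (i + 1),
          (1:ℝ) ^ j * (-1) ^ (i - j) * (i.choose j : ℝ) := add_pow 1 (-1) i
      simp only [one_pow, one_mul] at h0
      rw [show ((1:ℝ) + (-1)) = 0 by ring, zero_pow (by omega : i ≠ 0)] at h0
      rw [← h0]
    | (k' + 1) =>
      obtain ⟨i', rfl⟩ : ∃ i', i = i' + 1 := ⟨i - 1, by omega⟩
      unfold finDiff0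
      rw [Finset.sum_range_succ']
      simp only [Nat.cast_zero, zero_pow (by omega : k' + 1 ≠ 0), mul_zero, add_zero]
      push_cast
      have hstep : ∀ t : ℕ, (-1:ℝ) ^ (i' - t) * ((i'+1).choose (t+1) : ℝ) * ((t:ℝ)+1) ^ (k'+1)
          = ((i':ℝ)+1) * ((-1:ℝ) ^ (i' - t) * (i'.choose t : ℝ) * ((t:ℝ)+1) ^ k') := by
        intro t
        have hc : ((i'+1).choose (t+1) : ℝ) * ((t:ℝ)+1) = ((i':ℝ)+1) * (i'.choose t : ℝ) := by
          have := Nat.add_one_mul_choose_eq i' t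
          have := congrArg (fun x : ℕ => (x : ℝ)) this
          push_cast at this
          linarith [this]
        rw [pow_succ ((t:ℝ)+1) k']
        calc (-1:ℝ) ^ (i' - t) * ((i'+1).choose (t+1) : ℝ) * (((t:ℝ)+1) ^ k' * ((t:ℝ)+1))
            = (-1:ℝ) ^ (i' - t) * (((i'+1).choose (t+1) : ℝ) * ((t:ℝ)+1)) * ((t:ℝ)+1) ^ k' := by ring
          _ = (-1:ℝ) ^ (i' - t) * (((i':ℝ)+1) * (i'.choose t : ℝ)) * ((t:ℝ)+1) ^ k' := by rw [hc]
          _ = ((i':ℝ)+1) * ((-1:ℝ) ^ (i' - t) * (i'.choose t : ℝ) * ((t:ℝ)+1) ^ k') := by ring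
      calc ∑ t ∈ Finset.range (i' + 1),
            (-1:ℝ) ^ (i' - t) * ((i'+1).choose (t+1) : ℝ) * ((t:ℝ)+1) ^ (k'+1)
          = ∑ t ∈ Finset.range (i' + 1),
            ((i':ℝ)+1) * ((-1:ℝ) ^ (i' - t) * (i'.choose t : ℝ) * ((t:ℝ)+1) ^ k') := by
            refine Finset.sum_congr rfl fun t _ => ?_
            have := hstep t
            push_cast at this ⊢
            convert this using 2
        _ = ((i':ℝ)+1) * ∑ t ∈ Finset.range (i' + 1),
            (-1:ℝ) ^ (i' - t) * (i'.choose t : ℝ) * ((t:ℝ)+1) ^ k' := by rw [Finset.mul_sum]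
        _ = 0 := by
            have hexp : ∀ t : ℕ, ((t:ℝ)+1) ^ k' = ∑ s ∈ Finset.range (k' + 1),
                (t:ℝ) ^ s * (k'.choose s : ℝ) := by
              intro t
              have := add_pow (t:ℝ) 1 k'
              simpa using this
            have : ∑ t ∈ Finset.range (i' + 1),
                (-1:ℝ) ^ (i' - t) * (i'.choose t : ℝ) * ((t:ℝ)+1) ^ k'
                = ∑ s ∈ Finset.range (k' + 1), (k'.choose s : ℝ) * finDiff0 i' s := by
              simp_rw [hexp, Finset.mul_sum]
              rw [Finset.sum_comm]
              refine Finset.sum_congr rfl fun s _ => ?_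
              unfold finDiff0
              rw [Finset.mul_sum]
              refine Finset.sum_congr rfl fun t _ => ?_
              ring
            rw [this]
            have hz : ∀ s ∈ Finset.range (k' + 1), (k'.choose s : ℝ) * finDiff0 i' s = 0 := by
              intro s hs
              rw [Finset.mem_range] at hs
              rw [IH s (by omega) i' (by omega), mul_zero]
            rw [Finset.sum_congr rfl hz, Finset.sum_const_zero, mul_zero]

lemma alt_sum_choose (M : ℕ) :
    ∑ t ∈ Finset.range (M+1), (-1:ℝ)^t * (M.choose t : ℝ) = if M = 0 then 1 else 0 := by
  have h := Int.alternating_sum_range_choose (n := M)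
  have h2 := congrArg (fun z : ℤ => (z : ℝ)) h
  simp only [Int.cast_sum, Int.cast_mul, Int.cast_pow, Int.cast_neg, Int.cast_one,
    Int.cast_natCast] at h2
  rw [h2]
  split_ifs <;> simp

lemma delta_sum (γ j : ℕ) (hj : j ≤ γ) :
    ∑ i ∈ Finset.range (γ+1), (-1:ℝ)^(i+j) * (i.choose j : ℝ) * (γ.choose i : ℝ)
      = if γ = j then 1 else 0 := by
  have h1 : ∑ i ∈ Finset.range (γ+1), (-1:ℝ)^(i+j) * (i.choose j : ℝ) * (γ.choose i : ℝ)
      = ∑ i ∈ Finset.Ico j (γ+1), (-1:ℝ)^(i+j) * (i.choose j : ℝ) * (γ.choose i : ℝ) := by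
    refine (Finset.sum_subset ?_ ?_).symm
    · intro x hx
      rw [Finset.mem_Ico] at hx
      rw [Finset.mem_range]
      omega
    · intro x hx hnx
      rw [Finset.mem_range] at hx
      rw [Finset.mem_Ico] at hnx
      rw [Nat.choose_eq_zero_of_lt (by omega : x < j)]
      simp
  rw [h1, Finset.sum_Ico_eq_sum_range]
  have h2 : ∀ t ∈ Finset.range (γ + 1 - j),
      (-1:ℝ)^(j+t+j) * ((j+t).choose j : ℝ) * (γ.choose (j+t) : ℝ)
      = (γ.choose j : ℝ) * ((-1:ℝ)^t * ((γ-j).choose t : ℝ)) := by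
    intro t ht
    rw [Finset.mem_range] at ht
    have hc := Nat.choose_mul (n := γ) (show j ≤ j + t by omega)
    have hc2 : (γ.choose (j+t) : ℝ) * ((j+t).choose j : ℝ) = (γ.choose j : ℝ) * ((γ-j).choose t : ℝ) := by
      rw [← Nat.cast_mul, hc, Nat.cast_mul, Nat.add_sub_cancel_left]
    have hsign : (-1:ℝ)^(j+t+j) = (-1:ℝ)^t := by
      rw [show j+t+j = 2*j + t by omega, pow_add, pow_mul, neg_one_sq, one_pow, one_mul]
    rw [hsign]
    calc (-1:ℝ)^t * ((j+t).choose j : ℝ) * (γ.choose (j+t) : ℝ)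
        = (-1:ℝ)^t * ((γ.choose (j+t) : ℝ) * ((j+t).choose j : ℝ)) := by ring
      _ = (-1:ℝ)^t * ((γ.choose j : ℝ) * ((γ-j).choose t : ℝ)) := by rw [hc2]
      _ = (γ.choose j : ℝ) * ((-1:ℝ)^t * ((γ-j).choose t : ℝ)) := by ring
  rw [Finset.sum_congr rfl h2, ← Finset.mul_sum]
  rw [show γ + 1 - j = (γ - j) + 1 by omega, alt_sum_choose]
  by_cases hgj : γ = j
  · subst hgj
    simp
  · rw [if_neg (by omega), if_neg hgj, mul_zero]

lemma newton_nat_aux (n γ : ℕ) :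
    ∑ i ∈ Finset.range (γ+1), finDiff0 i n * (γ.choose i : ℝ) = (γ:ℝ)^n := by
  have hext : ∀ i ∈ Finset.range (γ+1), finDiff0 i n * (γ.choose i : ℝ)
      = ∑ j ∈ Finset.range (γ+1), (-1:ℝ)^(i+j) * (i.choose j:ℝ) * (j:ℝ)^n * (γ.choose i:ℝ) := by
    intro i hi
    rw [Finset.mem_range] at hi
    rw [finDiff0_eq, Finset.sum_mul]
    refine Finset.sum_subset ?_ ?_
    · intro x hx
      rw [Finset.mem_range] at hx ⊢
      omega
    · intro j hj hj2
      rw [Finset.mem_range] at hj hj2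
      rw [Nat.choose_eq_zero_of_lt (by omega : i < j)]
      simp
  rw [Finset.sum_congr rfl hext, Finset.sum_comm]
  have hinner : ∀ j ∈ Finset.range (γ+1),
      ∑ i ∈ Finset.range (γ+1), (-1:ℝ)^(i+j) * (i.choose j:ℝ) * (j:ℝ)^n * (γ.choose i:ℝ)
      = (if j = γ then (j:ℝ)^n else 0) := by
    intro j hj
    rw [Finset.mem_range] at hj
    have : ∑ i ∈ Finset.range (γ+1), (-1:ℝ)^(i+j) * (i.choose j:ℝ) * (j:ℝ)^n * (γ.choose i:ℝ)
        = (j:ℝ)^n * ∑ i ∈ Finset.range (γ+1), (-1:ℝ)^(i+j) * (i.choose j:ℝ) * (γ.choose i:ℝ) := by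
      rw [Finset.mul_sum]
      exact Finset.sum_congr rfl fun i _ => by ring
    rw [this, delta_sum γ j (by omega)]
    by_cases hc : γ = j
    · rw [if_pos hc, if_pos hc.symm, mul_one]
    · rw [if_neg hc, if_neg (fun h => hc h.symm), mul_zero]
  rw [Finset.sum_congr rfl hinner, Finset.sum_ite_eq' (Finset.range (γ+1)) γ (fun j => (j:ℝ)^n)]
  rw [if_pos (by rw [Finset.mem_range]; omega)]

lemma newton_nat (n γ : ℕ) :
    (γ:ℝ)^n = ∑ i ∈ Finset.range (n+1), finDiff0 i n * (γ.choose i : ℝ) := by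
  have h1 : ∑ i ∈ Finset.range (n+1), finDiff0 i n * (γ.choose i : ℝ)
      = ∑ i ∈ Finset.range (max n γ + 1), finDiff0 i n * (γ.choose i : ℝ) := by
    refine Finset.sum_subset ?_ ?_
    · intro x hx
      rw [Finset.mem_range] at hx ⊢
      omega
    · intro i hi hni
      rw [Finset.mem_range] at hi hni
      rw [finDiff0_eq_zero n i (by omega), zero_mul]
  have h2 : ∑ i ∈ Finset.range (γ+1), finDiff0 i n * (γ.choose i : ℝ)
      = ∑ i ∈ Finset.range (max n γ + 1), finDiff0 i n * (γ.choose i : ℝ) := by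
    refine Finset.sum_subset ?_ ?_
    · intro x hx
      rw [Finset.mem_range] at hx ⊢
      omega
    · intro i hi hni
      rw [Finset.mem_range] at hi hni
      rw [Nat.choose_eq_zero_of_lt (by omega : γ < i)]
      simp
  rw [h1, ← h2, newton_nat_aux]

open Polynomial in
lemma newton_poly (n : ℕ) :
    (Polynomial.X : Polynomial ℝ)^n
      = ∑ i ∈ Finset.range (n+1), Polynomial.C (finDiff0 i n / (i.factorial : ℝ)) * descPochhammer ℝ i := by
  apply Polynomial.eq_of_infinite_eval_eq
  apply Set.Infinite.mono (s := Set.range ((↑) : ℕ → ℝ))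
  · intro x hx
    obtain ⟨γ, rfl⟩ := hx
    simp only [Set.mem_setOf_eq, eval_pow, eval_X, eval_finset_sum, eval_mul, eval_C]
    rw [newton_nat n γ]
    refine Finset.sum_congr rfl fun i _ => ?_
    rw [descPochhammer_eval_eq_descFactorial ℝ γ i, Nat.descFactorial_eq_factorial_mul_choose]
    push_cast
    field_simp
  · exact Set.infinite_range_of_injective Nat.cast_injective

open Polynomial in
lemma newton_neg (n γ : ℕ) :
    ((γ:ℝ)+1)^n = ∑ i ∈ Finset.range (n+1),
      finDiff0 i n * (-1:ℝ)^(n+i) * (((γ+i).choose i : ℕ) : ℝ) := by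
  have h := congrArg (Polynomial.eval (-((γ:ℝ)+1))) (newton_poly n)
  simp only [eval_pow, eval_X, eval_finset_sum, eval_mul, eval_C] at h
  have hdesc : ∀ i : ℕ, (descPochhammer ℝ i).eval (-((γ:ℝ)+1))
      = (-1:ℝ)^i * ((i.factorial : ℝ) * (((γ+i).choose i : ℕ) : ℝ)) := by
    intro i
    have ha := ascPochhammer_eval_neg_eq_descPochhammer (R := ℝ) (-((γ:ℝ)+1)) i
    rw [neg_neg] at ha
    have hval : (ascPochhammer ℝ i).eval ((γ:ℝ)+1) = ((i.factorial : ℝ) * (((γ+i).choose i : ℕ) : ℝ)) := by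
      have : ((γ:ℝ)+1) = (((γ+1 : ℕ) : ℝ)) := by push_cast; ring
      rw [this, ← ascPochhammer_eval_cast, ascPochhammer_nat_eq_ascFactorial]
      rw [← Nat.add_descFactorial_eq_ascFactorial, Nat.descFactorial_eq_factorial_mul_choose]
      push_cast
      ring
    -- ha : asc.eval (γ+1) = (-1)^i * desc.eval (-(γ+1))
    have := ha.symm
    rw [hval] at ha
    have h2 : (-1:ℝ)^i * ((-1:ℝ)^i * (descPochhammer ℝ i).eval (-((γ:ℝ)+1)))
        = (descPochhammer ℝ i).eval (-((γ:ℝ)+1)) := by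
      rw [← mul_assoc, ← pow_add, show i+i = 2*i by omega, pow_mul, neg_one_sq, one_pow, one_mul]
    rw [← ha] at h2
    exact h2.symm
  simp only [hdesc] at h
  rw [show ((γ:ℝ)+1)^n = (-1:ℝ)^n * (-((γ:ℝ)+1))^n from by
    rw [neg_pow ((γ:ℝ)+1) n, ← mul_assoc, ← pow_add, show n+n=2*n by omega, pow_mul, neg_one_sq,
      one_pow, one_mul]]
  rw [h, Finset.mul_sum]
  refine Finset.sum_congr rfl fun i hi => ?_
  have hfac : (i.factorial : ℝ) ≠ 0 := Nat.cast_ne_zero.mpr (Nat.factorial_ne_zero i)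
  rw [pow_add]
  field_simp

lemma hasSum_pow_succ_mul (n : ℕ) (hn : 1 ≤ n) {l : ℝ} (hl : |l| < 1) :
    HasSum (fun γ : ℕ => ((γ:ℝ)+1)^n * l^(γ+1))
      (l * eulerE (n-1) l / (1-l)^(n+1)) := by
  have hl' : ‖l‖ < 1 := by rwa [Real.norm_eq_abs]
  have hi : ∀ i ∈ Finset.range (n+1),
      HasSum (fun γ : ℕ => (finDiff0 i n * (-1:ℝ)^(n+i) * l) * ((((γ+i).choose i : ℕ):ℝ) * l^γ))
        ((finDiff0 i n * (-1:ℝ)^(n+i) * l) * (1/(1-l)^(i+1))) := by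
    intro i _
    exact (hasSum_choose_mul_geometric_of_norm_lt_one i hl').mul_left _
  have H := hasSum_sum hi
  have hfun : (fun γ : ℕ => ∑ i ∈ Finset.range (n+1),
      (finDiff0 i n * (-1:ℝ)^(n+i) * l) * ((((γ+i).choose i : ℕ):ℝ) * l^γ))
      = (fun γ : ℕ => ((γ:ℝ)+1)^n * l^(γ+1)) := by
    funext γ
    rw [newton_neg n γ, Finset.sum_mul]
    refine Finset.sum_congr rfl fun i _ => ?_
    rw [pow_succ]
    ring
  rw [hfun] at H
  convert H using 1
  -- value equality
  have h1l : (1:ℝ) - l ≠ 0 := by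
    have : l < 1 := lt_of_le_of_lt (le_abs_self l) hl
    intro hc
    linarith
  have hE : eulerE (n-1) l = ∑ i ∈ Finset.range (n+1), finDiff0 i n * (l-1)^(n-i) := by
    unfold eulerE
    rw [show n - 1 + 1 = n by omega]
    refine Finset.sum_subset ?_ ?_
    · intro x hx
      rw [Finset.mem_Icc] at hx
      rw [Finset.mem_range]
      omega
    · intro i hi hni
      rw [Finset.mem_range] at hi
      rw [Finset.mem_Icc] at hni
      have hi0 : i = 0 := by omega
      subst hi0
      have hz : finDiff0 0 n = 0 := by
        unfold finDiff0
        simp [zero_pow (show n ≠ 0 by omega)]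
      rw [hz, zero_mul]
  rw [hE, Finset.mul_sum, Finset.sum_div]
  refine Finset.sum_congr rfl fun i hi => ?_
  rw [Finset.mem_range] at hi
  have e1 : (-1:ℝ)^(n+i) = (-1:ℝ)^(n-i) := by
    rw [show n+i = (n-i)+2*i by omega, pow_add, pow_mul, neg_one_sq, one_pow, mul_one]
  have e2 : (1-l)^(n+1) = (1-l)^(n-i) * (1-l)^(i+1) := by
    rw [← pow_add]
    congr 1
    omega
  have e3 : (l-1)^(n-i) = (-1:ℝ)^(n-i) * (1-l)^(n-i) := by
    rw [show l-1 = -(1-l) by ring, neg_pow]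
  rw [e1, e2, e3]
  field_simp


/-- Let `m ≥ 2`, `h > 0` and `|λ| < e^{-h}`.  Then the series `∑_{γ=1}^{∞} λ^γ ψ_m(hγ)`
converges and equals `λ P_{2m-2}(λ) / (4(λe^h - 1)(e^h - λ)(1-λ)^{2m-2})`. -/
theorem hasSum_pow_mul_psiM (m : ℕ) (hm : 2 ≤ m) (h : ℝ) (hh : 0 < h)
    (l : ℝ) (hl : |l| < Real.exp (-h)) :
    HasSum (fun γ : ℕ => l ^ (γ + 1) * psiM m (h * ((γ : ℝ) + 1)))
      (l * Ppoly m h l /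
        (4 * (l * Real.exp h - 1) * (Real.exp h - l) * (1 - l) ^ (2 * m - 2))) := by

  have hexp1 : (1:ℝ) < Real.exp h := by
    rw [show (1:ℝ) = Real.exp 0 by simp]
    exact Real.exp_lt_exp.mpr hh
  have hexpneg : Real.exp (-h) < 1 := by
    rw [show (1:ℝ) = Real.exp 0 by simp]
    exact Real.exp_lt_exp.mpr (by linarith)
  have hl1 : |l| < 1 := hl.trans hexpneg
  have hlt1 : l < 1 := lt_of_le_of_lt (le_abs_self l) hl1
  have hgtm1 : -1 < l := by
    have := neg_abs_le l
    linarith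
  have hprod : Real.exp (-h) * Real.exp h = 1 := by
    rw [← Real.exp_add]
    simp
  have hr1 : ‖l * Real.exp h‖ < 1 := by
    rw [Real.norm_eq_abs, abs_mul, abs_of_pos (Real.exp_pos h)]
    calc |l| * Real.exp h < Real.exp (-h) * Real.exp h :=
          mul_lt_mul_of_pos_right hl (Real.exp_pos h)
      _ = 1 := hprod
  have hr2 : ‖l * Real.exp (-h)‖ < 1 := by
    rw [Real.norm_eq_abs, abs_mul, abs_of_pos (Real.exp_pos (-h))]
    nlinarith [Real.exp_pos (-h), abs_nonneg l]
  have d1 : 1 - l * Real.exp h ≠ 0 := by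
    have : l * Real.exp h < 1 := lt_of_le_of_lt (le_abs_self _) (by rwa [Real.norm_eq_abs] at hr1)
    intro hc; linarith
  have d2 : 1 - l * Real.exp (-h) ≠ 0 := by
    have : l * Real.exp (-h) < 1 := lt_of_le_of_lt (le_abs_self _) (by rwa [Real.norm_eq_abs] at hr2)
    intro hc; linarith
  have d3 : (1:ℝ) - l ≠ 0 := by intro hc; linarith
  have d4 : l * Real.exp h - 1 ≠ 0 := fun hc => d1 (by linarith)
  have d5 : Real.exp h - l ≠ 0 := by
    intro hc; linarith
  have G1 := (hasSum_geometric_of_norm_lt_one hr1).mul_left (l * Real.exp h)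
  have G2 := (hasSum_geometric_of_norm_lt_one hr2).mul_left (l * Real.exp (-h))
  have hks : ∀ k ∈ Finset.Icc 1 (m-1),
      HasSum (fun γ : ℕ => (h^(2*k-1) / ((2*k-1).factorial : ℝ)) * (((γ:ℝ)+1)^(2*k-1) * l^(γ+1)))
        ((h^(2*k-1) / ((2*k-1).factorial : ℝ)) * (l * eulerE (2*k-1-1) l / (1-l)^(2*k-1+1))) := by
    intro k hk
    rw [Finset.mem_Icc] at hk
    exact (hasSum_pow_succ_mul (2*k-1) (by omega) hl1).mul_left _
  have HS := ((G1.mul_left (1/4)).sub (G2.mul_left (1/4))).sub ((hasSum_sum hks).mul_left (1/2))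
  have hfun : (fun γ : ℕ => 1/4 * (l * Real.exp h * (l * Real.exp h)^γ)
        - 1/4 * (l * Real.exp (-h) * (l * Real.exp (-h))^γ)
        - 1/2 * ∑ k ∈ Finset.Icc 1 (m-1),
            (h^(2*k-1) / ((2*k-1).factorial : ℝ)) * (((γ:ℝ)+1)^(2*k-1) * l^(γ+1)))
      = (fun γ : ℕ => l ^ (γ + 1) * psiM m (h * ((γ : ℝ) + 1))) := by
    funext γ
    have hxpos : 0 < h * ((γ:ℝ)+1) := by positivity
    unfold psiM
    rw [Real.sign_of_pos hxpos]
    have he1 : Real.exp (h * ((γ:ℝ)+1)) = Real.exp h ^ (γ+1) := by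
      rw [show h * ((γ:ℝ)+1) = ((γ+1 : ℕ):ℝ) * h by push_cast; ring, Real.exp_nat_mul]
    have he2 : Real.exp (-(h * ((γ:ℝ)+1))) = Real.exp (-h) ^ (γ+1) := by
      rw [show -(h * ((γ:ℝ)+1)) = ((γ+1 : ℕ):ℝ) * (-h) by push_cast; ring, Real.exp_nat_mul]
    rw [he1, he2]
    have hsum : l^(γ+1) * ∑ k ∈ Finset.Icc 1 (m-1),
          (h * ((γ:ℝ)+1))^(2*k-1) / (((2*k-1).factorial : ℕ):ℝ)
        = ∑ k ∈ Finset.Icc 1 (m-1),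
          (h^(2*k-1) / ((2*k-1).factorial : ℝ)) * (((γ:ℝ)+1)^(2*k-1) * l^(γ+1)) := by
      rw [Finset.mul_sum]
      refine Finset.sum_congr rfl fun k _ => ?_
      rw [mul_pow]
      ring
    rw [← hsum]
    ring
  rw [hfun] at HS
  convert HS using 1
  case e'_3 => rfl
  -- value equality
  have hSS : ∑ k ∈ Finset.Icc 1 (m-1),
      (h^(2*k-1) / ((2*k-1).factorial : ℝ)) * (l * eulerE (2*k-1-1) l / (1-l)^(2*k-1+1))
      = (∑ j ∈ Finset.Icc 1 (m-1),
          h ^ (2 * j - 1) / (Nat.factorial (2 * j - 1) : ℝ)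
            * (1 - l) ^ (2 * m - 2 - 2 * j) * eulerE (2 * j - 2) l) * l / (1-l)^(2*m-2) := by
    rw [Finset.sum_mul, Finset.sum_div]
    refine Finset.sum_congr rfl fun k hk => ?_
    rw [Finset.mem_Icc] at hk
    rw [show 2*k-1-1 = 2*k-2 by omega, show 2*k-1+1 = 2*k by omega]
    have hsplit : (1-l)^(2*m-2) = (1-l)^(2*m-2-2*k) * (1-l)^(2*k) := by
      rw [← pow_add]
      congr 1
      omega
    rw [hsplit]
    have hp1 : (1-l)^(2*m-2-2*k) ≠ 0 := pow_ne_zero _ d3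
    have hp2 : (1-l)^(2*k) ≠ 0 := pow_ne_zero _ d3
    field_simp
  rw [hSS]
  unfold Ppoly
  rw [show (2:ℝ)*h = h + h by ring, Real.exp_add, Real.exp_neg]
  have hpne : (1-l)^(2*m-2) ≠ 0 := pow_ne_zero _ d3
  have hexpne : Real.exp h ≠ 0 := (Real.exp_pos h).ne'
  field_simp
  ring
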